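/- arXiv:1701.02075 — 3 statements merged into one kernel-verified Lean document; each statement's English description precedes it below -/
import Mathlib

section
/- Let p be an odd prime, r = p^m with m odd and m_p := m mod p nonzero. For A ∈ F_p^* and B ∈ F_p, let N(A,B) = #{x ∈ F_r : Tr(x²) = A, Tr(x) = B} and Δ = B² - m_p·A. Then N(A,B) = p^{m-2} + η(-m_p)(p-1)p^{-2}·G_m·G if Δ = 0, and N(A,B) = p^{m-2} - η(-m_p)p^{-2}·G_m·G if Δ ≠ 0, where η is the quadratic character of F_p, G its Gauss sum, and G_m the quadratic Gauss sum over F_r. -/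
open Finset AddChar

set_option linter.unusedSectionVars false
set_option maxHeartbeats 1000000

noncomputable section Stmt13Aux

variable {K : Type*} [Field K] [Fintype K] [DecidableEq K]

/-- complex-valued quadratic character -/
def qc (K : Type*) [Field K] [Fintype K] [DecidableEq K] : MulChar K ℂ :=
  (quadraticChar K).ringHomComp (Int.castRingHom ℂ)

lemma qc_apply' (a : K) :
    qc K a = if a = 0 then 0 else if IsSquare a then 1 else -1 := by
  simp only [qc, MulChar.ringHomComp_apply, quadraticChar_apply, quadraticCharFun]
  split_ifs <;> simp

lemma qc_cast (a : K) : qc K a = ((quadraticChar K a : ℤ) : ℂ) := by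
  simp [qc, MulChar.ringHomComp_apply]

lemma qc_sq {a : K} (ha : a ≠ 0) : qc K a * qc K a = 1 := by
  rw [← map_mul, ← sq, qc_cast, quadraticChar_sq_one' ha, Int.cast_one]

lemma qc_inv {a : K} (ha : a ≠ 0) : qc K a⁻¹ = qc K a := by
  have h1 : qc K a * qc K a⁻¹ = 1 := by
    rw [← map_mul, mul_inv_cancel₀ ha, map_one]
  calc qc K a⁻¹ = (qc K a * qc K a) * qc K a⁻¹ := by rw [qc_sq ha, one_mul]
  _ = qc K a * (qc K a * qc K a⁻¹) := by ring
  _ = qc K a := by rw [h1, mul_one]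

lemma sum_psi_mul (ψ : AddChar K ℂ) (hψ : ψ ≠ 0) {c : K} (hc : c ≠ 0) :
    ∑ x : K, ψ (c * x) = 0 := by
  have h : ψ.mulShift c ≠ 0 := by
    intro h
    apply hψ
    rw [AddChar.eq_zero_iff] at h ⊢
    intro x
    have hx := h (c⁻¹ * x)
    rwa [mulShift_apply, ← mul_assoc, mul_inv_cancel₀ hc, one_mul] at hx
  have := AddChar.sum_eq_zero_iff_ne_zero.mpr h
  simpa [mulShift_apply] using this

lemma sum_psi_ite (ψ : AddChar K ℂ) (hψ : ψ ≠ 0) (c : K) :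
    ∑ x : K, ψ (c * x) = if c = 0 then (Fintype.card K : ℂ) else 0 := by
  split_ifs with h
  · simp [h, Finset.card_univ]
  · exact sum_psi_mul ψ hψ h

lemma sum_psi_sq (hK : ringChar K ≠ 2) (ψ : AddChar K ℂ) (hψ : ψ ≠ 0) {a : K} (ha : a ≠ 0) :
    ∑ x : K, ψ (a * x ^ 2) = qc K a * gaussSum (qc K) ψ := by
  have hcount : ∀ t : K, ((univ.filter fun y : K => y ^ 2 = t).card : ℂ) = qc K t + 1 := by
    intro t
    have h := quadraticChar_card_sqrts hK t
    rw [Set.toFinset_setOf] at h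
    rw [qc_cast]
    exact_mod_cast congrArg (fun z : ℤ => (z : ℂ)) h
  have h1 : ∑ x : K, ψ (a * x ^ 2)
      = ∑ t : K, ∑ y ∈ univ.filter (fun y : K => y ^ 2 = t), ψ (a * y ^ 2) :=
    (Finset.sum_fiberwise_of_maps_to (fun y _ => mem_univ _) _).symm
  rw [h1]
  have h2 : ∀ t : K, ∑ y ∈ univ.filter (fun y : K => y ^ 2 = t), ψ (a * y ^ 2)
      = ((univ.filter fun y : K => y ^ 2 = t).card : ℂ) * ψ (a * t) := by
    intro t
    rw [Finset.sum_congr rfl (fun y hy => by rw [(Finset.mem_filter.mp hy).2]),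
      Finset.sum_const, nsmul_eq_mul]
  rw [Finset.sum_congr rfl fun t _ => h2 t]
  simp_rw [hcount, add_mul, one_mul]
  rw [Finset.sum_add_distrib, sum_psi_mul ψ hψ ha, add_zero]
  have ha' : IsUnit a := ha.isUnit
  have key := gaussSum_mulShift (qc K) ψ ha'.unit
  rw [ha'.unit_spec] at key
  have hg : gaussSum (qc K) (ψ.mulShift a) = ∑ t : K, qc K t * ψ (a * t) := by
    simp [gaussSum, mulShift_apply]
  calc ∑ t : K, qc K t * ψ (a * t) = gaussSum (qc K) (ψ.mulShift a) := hg.symm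
    _ = (qc K a * qc K a) * gaussSum (qc K) (ψ.mulShift a) := by rw [qc_sq ha, one_mul]
    _ = qc K a * (qc K a * gaussSum (qc K) (ψ.mulShift a)) := by ring
    _ = qc K a * gaussSum (qc K) ψ := by rw [key]

lemma sum_psi_quad (hK : ringChar K ≠ 2) (ψ : AddChar K ℂ) (hψ : ψ ≠ 0)
    {a : K} (ha : a ≠ 0) (b : K) :
    ∑ x : K, ψ (a * x ^ 2 + b * x)
      = qc K a * gaussSum (qc K) ψ * ψ (-(b ^ 2 / (4 * a))) := by
  have h2 : (2 : K) ≠ 0 := Ring.two_ne_zero hK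
  have h4 : (4 : K) ≠ 0 := by
    have h : (4 : K) = 2 * 2 := by norm_num
    rw [h]; exact mul_ne_zero h2 h2
  have key : ∀ x : K, a * x ^ 2 + b * x
      = a * (x + b / (2 * a)) ^ 2 + -(b ^ 2 / (4 * a)) := by
    intro x; field_simp; ring
  calc ∑ x : K, ψ (a * x ^ 2 + b * x)
      = ∑ x : K, ψ (a * (x + b / (2 * a)) ^ 2) * ψ (-(b ^ 2 / (4 * a))) := by
        refine Finset.sum_congr rfl fun x _ => ?_
        rw [key x, map_add_eq_mul]
    _ = (∑ x : K, ψ (a * x ^ 2)) * ψ (-(b ^ 2 / (4 * a))) := by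
        rw [← Finset.sum_mul]
        congr 1
        exact (Fintype.sum_equiv (Equiv.addRight (b / (2 * a)))
          (fun x => ψ (a * (x + b / (2 * a)) ^ 2)) (fun y => ψ (a * y ^ 2))
          (fun x => rfl)).symm ▸ rfl
    _ = qc K a * gaussSum (qc K) ψ * ψ (-(b ^ 2 / (4 * a))) := by
        rw [sum_psi_sq hK ψ hψ ha]

lemma nat_geom (p : ℕ) (hp : 1 ≤ p) :
    ∀ m : ℕ, (p - 1) * ∑ i ∈ Finset.range m, p ^ i = p ^ m - 1
  | 0 => by simp
  | (m + 1) => by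
    rw [Finset.sum_range_succ, Nat.mul_add, nat_geom p hp m, pow_succ, Nat.sub_mul, one_mul]
    have h1 : 1 ≤ p ^ m := Nat.one_le_pow _ _ hp
    have h2 : p ^ m ≤ p * p ^ m := Nat.le_mul_of_pos_left _ hp
    rw [mul_comm (p ^ m) p]
    omega

lemma nat_geom_odd {p : ℕ} (hp : Odd p) {m : ℕ} (hm : Odd m) :
    Odd (∑ i ∈ Finset.range m, p ^ i) := by
  rw [Nat.odd_iff, Finset.sum_nat_mod]
  have h : ∀ i ∈ Finset.range m, p ^ i % 2 = 1 := fun i _ => Nat.odd_iff.mp (hp.pow)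
  rw [Finset.sum_congr rfl h, Finset.sum_const, Finset.card_range, smul_eq_mul, mul_one]
  exact Nat.odd_iff.mp hm

lemma quadChar_algebraMap (p m : ℕ) [Fact p.Prime] (hodd : p ≠ 2) (hmo : Odd m)
    (F : Type) [Field F] [Fintype F] [DecidableEq F] [Algebra (ZMod p) F]
    (hcard : Fintype.card F = p ^ m) (a : ZMod p) :
    quadraticChar F (algebraMap (ZMod p) F a) = quadraticChar (ZMod p) a := by
  have hp : p.Prime := Fact.out
  have hinj : Function.Injective (algebraMap (ZMod p) F) := (algebraMap (ZMod p) F).injective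
  by_cases ha : a = 0
  · simp [ha]
  have hrF : ringChar F = p := by
    rw [← Algebra.ringChar_eq (ZMod p) F, ZMod.ringChar_zmod_n]
  have hF2 : ringChar F ≠ 2 := by rw [hrF]; exact hodd
  have hZ2 : ringChar (ZMod p) ≠ 2 := by rw [ZMod.ringChar_zmod_n]; exact hodd
  have haF : algebraMap (ZMod p) F a ≠ 0 := (map_ne_zero_iff (algebraMap (ZMod p) F) hinj).mpr ha
  -- arithmetic
  have hpodd : Odd p := hp.odd_of_ne_two hodd
  obtain ⟨k, hk⟩ := hpodd
  set s : ℕ := ∑ i ∈ Finset.range m, p ^ i with hs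
  have hgeom : (p - 1) * s = p ^ m - 1 := nat_geom p hp.one_le m
  have hsodd : Odd s := nat_geom_odd (hp.odd_of_ne_two hodd) hmo
  have hpm1 : 1 ≤ p ^ m := Nat.one_le_pow _ _ hp.pos
  have hks : p ^ m / 2 = k * s := by
    have h1 : (p - 1) * s = 2 * (k * s) := by
      rw [show p - 1 = 2 * k from by omega, mul_assoc]
    omega
  have hk2 : p / 2 = k := by omega
  -- Euler for F
  have hEF : ((quadraticChar F (algebraMap (ZMod p) F a) : ℤ) : F)
      = (algebraMap (ZMod p) F a) ^ (p ^ m / 2) := by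
    have := quadraticChar_eq_pow_of_char_ne_two' hF2 (algebraMap (ZMod p) F a)
    rwa [hcard] at this
  have hEZ : ((quadraticChar (ZMod p) a : ℤ) : ZMod p) = a ^ (p / 2) := by
    have := quadraticChar_eq_pow_of_char_ne_two' hZ2 a
    rwa [ZMod.card] at this
  have hpow : (algebraMap (ZMod p) F a) ^ (p ^ m / 2)
      = (algebraMap (ZMod p) F (((quadraticChar (ZMod p) a : ℤ) : ZMod p))) ^ s := by
    rw [hks, pow_mul, ← map_pow, ← hk2, ← hEZ]
  rcases quadraticChar_dichotomy ha with h1 | h1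
  · rw [h1]
    have hone : ((quadraticChar F (algebraMap (ZMod p) F a) : ℤ) : F) = 1 := by
      rw [hEF, hpow, h1]; push_cast; simp
    rcases quadraticChar_dichotomy haF with h2 | h2
    · exact h2
    · exfalso
      rw [h2] at hone
      push_cast at hone
      exact Ring.neg_one_ne_one_of_char_ne_two hF2 hone
  · rw [h1]
    have hone : ((quadraticChar F (algebraMap (ZMod p) F a) : ℤ) : F) = -1 := by
      rw [hEF, hpow, h1]
      push_cast
      exact hsodd.neg_one_pow
    rcases quadraticChar_dichotomy haF with h2 | h2
    · exfalso
      rw [h2] at hone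
      push_cast at hone
      exact Ring.neg_one_ne_one_of_char_ne_two hF2 hone.symm
    · exact h2

end Stmt13Aux

/-- For `m` odd with `p ∤ m`, `A ∈ F_p^*`, `B ∈ F_p`, `Δ = B² - m_p·A`:
`N(A,B) = p^{m-2} + η(-m_p)(p-1)p⁻²G_mG` if `Δ = 0`, and
`N(A,B) = p^{m-2} - η(-m_p)p⁻²G_mG` if `Δ ≠ 0`. -/
theorem stmt13 (p m : ℕ) [Fact p.Prime] (hodd : p ≠ 2) (hm : 2 < m) (hmo : Odd m)
    (hmp : ¬ p ∣ m)
    (F : Type) [Field F] [Fintype F] [DecidableEq F] [Algebra (ZMod p) F]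
    (hcard : Fintype.card F = p ^ m)
    (ζ : ℂ) (hζ : IsPrimitiveRoot ζ p)
    (ηm : F → ℂ)
    (hηm : ∀ a : F, ηm a = if a = 0 then 0 else if IsSquare a then 1 else -1)
    (η : ZMod p → ℂ)
    (hη : ∀ a : ZMod p, η a = if a = 0 then 0 else if IsSquare a then 1 else -1)
    (Gm : ℂ)
    (hGm : Gm = ∑ x ∈ Finset.univ.filter (fun x : F => x ≠ 0),
        ηm x * ζ ^ (Algebra.trace (ZMod p) F x).val)
    (G : ℂ)
    (hG : G = ∑ x ∈ Finset.univ.filter (fun x : ZMod p => x ≠ 0), η x * ζ ^ x.val)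
    (A B : ZMod p) (hA : A ≠ 0) :
    (B ^ 2 - (m : ZMod p) * A = 0 →
      ((Finset.univ.filter (fun x : F =>
          Algebra.trace (ZMod p) F (x ^ 2) = A ∧ Algebra.trace (ZMod p) F x = B)).card : ℂ)
        = (p : ℂ) ^ (m - 2)
            + η (-(m : ZMod p)) * ((p : ℂ) - 1) * ((p : ℂ) ^ 2)⁻¹ * Gm * G) ∧
    (B ^ 2 - (m : ZMod p) * A ≠ 0 →
      ((Finset.univ.filter (fun x : F =>
          Algebra.trace (ZMod p) F (x ^ 2) = A ∧ Algebra.trace (ZMod p) F x = B)).card : ℂ)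
        = (p : ℂ) ^ (m - 2)
            - η (-(m : ZMod p)) * ((p : ℂ) ^ 2)⁻¹ * Gm * G) := by
  classical
  have hp : p.Prime := Fact.out
  haveI : NeZero p := ⟨hp.ne_zero⟩
  have hpC : (p : ℂ) ≠ 0 := Nat.cast_ne_zero.mpr hp.ne_zero
  have hinj : Function.Injective (algebraMap (ZMod p) F) := (algebraMap (ZMod p) F).injective
  have hrF : ringChar F = p := by rw [← Algebra.ringChar_eq (ZMod p) F, ZMod.ringChar_zmod_n]
  have hF2 : ringChar F ≠ 2 := by rw [hrF]; exact hodd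
  have hZ2 : ringChar (ZMod p) ≠ 2 := by rw [ZMod.ringChar_zmod_n]; exact hodd
  have h2Z : (2 : ZMod p) ≠ 0 := Ring.two_ne_zero hZ2
  have h4Z : (4 : ZMod p) ≠ 0 := by
    have h : (4 : ZMod p) = 2 * 2 := by norm_num
    rw [h]; exact mul_ne_zero h2Z h2Z
  have hm0 : (m : ZMod p) ≠ 0 := by
    rw [Ne, ZMod.natCast_eq_zero_iff]; exact hmp
  have hfr : Module.finrank (ZMod p) F = m := by
    have h := Module.card_eq_pow_finrank (K := ZMod p) (V := F)
    rw [ZMod.card, hcard] at h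
    exact (Nat.pow_right_injective hp.two_le h).symm
  set T := Algebra.trace (ZMod p) F with hTdef
  have hTmap : ∀ c : ZMod p, T (algebraMap (ZMod p) F c) = (m : ZMod p) * c := by
    intro c
    rw [hTdef, Algebra.trace_algebraMap, hfr, nsmul_eq_mul]
  have hTsmul : ∀ (u : ZMod p) (x : F), T (algebraMap (ZMod p) F u * x) = u * T x := by
    intro u x
    rw [← Algebra.smul_def, map_smul, smul_eq_mul]
  -- additive characters
  have hζp : ζ ^ p = 1 := hζ.pow_eq_one
  set ψ₀ : AddChar (ZMod p) ℂ := AddChar.zmodChar p hζp with hψ₀def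
  have hψ₀app : ∀ c : ZMod p, ψ₀ c = ζ ^ c.val := fun c => rfl
  have hψ₀1 : ∀ c : ZMod p, ψ₀ c = 1 → c = 0 := by
    intro c hc
    by_contra h
    have hlt : c.val < p := ZMod.val_lt c
    have hpos : 0 < c.val := Nat.pos_of_ne_zero fun h0 => h ((ZMod.val_eq_zero c).mp h0)
    exact hζ.pow_ne_one_of_pos_of_lt hpos.ne' hlt (hψ₀app c ▸ hc)
  have hψ₀ne : ψ₀ ≠ 0 := by
    rw [AddChar.ne_zero_iff]
    exact ⟨1, fun h => one_ne_zero (hψ₀1 1 h)⟩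
  set ψ : AddChar F ℂ := ψ₀.compAddMonoidHom T.toAddMonoidHom with hψdef
  have hψapp : ∀ x : F, ψ x = ψ₀ (T x) := fun x => rfl
  have hψne : ψ ≠ 0 := by
    have htr : ∃ b : F, T b ≠ 0 := by
      by_contra hf
      push_neg at hf
      exact one_ne_zero ((traceForm_nondegenerate (ZMod p) F).1 1
        (fun n => by rw [Algebra.traceForm_apply, one_mul]; exact hf n))
    obtain ⟨b, hb⟩ := htr
    rw [AddChar.ne_zero_iff]
    exact ⟨b, fun h => hb (hψ₀1 _ h)⟩
  -- quadratic characters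
  have hηq : ∀ a : ZMod p, η a = qc (ZMod p) a := fun a => by rw [hη, qc_apply']
  have hηmq : ∀ a : F, ηm a = qc F a := fun a => by rw [hηm, qc_apply']
  have hqmap : ∀ a : ZMod p, qc F (algebraMap (ZMod p) F a) = qc (ZMod p) a := by
    intro a
    rw [qc_cast, qc_cast, quadChar_algebraMap p m hodd hmo F hcard a]
  -- Gauss sums
  have hGm' : Gm = gaussSum (qc F) ψ := by
    rw [hGm, gaussSum]
    have h0 : ∑ x ∈ Finset.univ.filter (fun x : F => x ≠ 0), qc F x * ψ x
        = ∑ x : F, qc F x * ψ x :=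
      Finset.sum_filter_of_ne (fun x _ hx => by rintro rfl; simp [qc_apply'] at hx)
    rw [← h0]
    exact Finset.sum_congr rfl fun x _ => by rw [hηmq, hψapp, hψ₀app]
  have hG' : G = gaussSum (qc (ZMod p)) ψ₀ := by
    rw [hG, gaussSum]
    have h0 : ∑ x ∈ Finset.univ.filter (fun x : ZMod p => x ≠ 0), qc (ZMod p) x * ψ₀ x
        = ∑ x : ZMod p, qc (ZMod p) x * ψ₀ x :=
      Finset.sum_filter_of_ne (fun x _ hx => by rintro rfl; simp [qc_apply'] at hx)
    rw [← h0]
    exact Finset.sum_congr rfl fun x _ => by rw [hηq, hψ₀app]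
  -- orthogonality
  have orth : ∀ c : ZMod p, ∑ u : ZMod p, ψ₀ (u * c) = if c = 0 then (p : ℂ) else 0 := by
    intro c
    have h := sum_psi_ite ψ₀ hψ₀ne c
    rw [ZMod.card] at h
    rw [← h]
    exact Finset.sum_congr rfl fun u _ => by rw [mul_comm]
  set N := (Finset.univ.filter (fun x : F => T (x ^ 2) = A ∧ T x = B)).card with hN
  have stepA : ∑ x : F, ((∑ u : ZMod p, ψ₀ (u * (T (x ^ 2) - A)))
        * (∑ v : ZMod p, ψ₀ (v * (T x - B)))) = (N : ℂ) * (p : ℂ) ^ 2 := by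
    have h1 : ∀ x : F, (∑ u : ZMod p, ψ₀ (u * (T (x ^ 2) - A)))
        * (∑ v : ZMod p, ψ₀ (v * (T x - B)))
        = if T (x ^ 2) = A ∧ T x = B then (p : ℂ) ^ 2 else 0 := by
      intro x
      rw [orth, orth]
      by_cases e1 : T (x ^ 2) = A <;> by_cases e2 : T x = B <;>
        simp [e1, e2, sub_eq_zero, sq]
    rw [Finset.sum_congr rfl fun x _ => h1 x, ← Finset.sum_filter, Finset.sum_const,
      nsmul_eq_mul, hN]
  set aM := algebraMap (ZMod p) F with haM
  set S : ZMod p → ZMod p → ℂ := fun u v => ∑ x : F, ψ (aM u * x ^ 2 + aM v * x) with hS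
  have hSdef : ∀ u v, S u v = ∑ x : F, ψ (aM u * x ^ 2 + aM v * x) := fun u v => rfl
  have expand : ∑ x : F, ((∑ u : ZMod p, ψ₀ (u * (T (x ^ 2) - A)))
        * (∑ v : ZMod p, ψ₀ (v * (T x - B))))
      = ∑ u : ZMod p, ∑ v : ZMod p, S u v * (ψ₀ (-(u * A)) * ψ₀ (-(v * B))) := by
    have h1 : ∀ x : F, (∑ u : ZMod p, ψ₀ (u * (T (x ^ 2) - A)))
        * (∑ v : ZMod p, ψ₀ (v * (T x - B)))
        = ∑ u : ZMod p, ∑ v : ZMod p,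
            ψ (aM u * x ^ 2 + aM v * x) * (ψ₀ (-(u * A)) * ψ₀ (-(v * B))) := by
      intro x
      rw [Finset.sum_mul_sum]
      refine Finset.sum_congr rfl fun u _ => Finset.sum_congr rfl fun v _ => ?_
      rw [hψapp, map_add, hTsmul, hTsmul]
      rw [mul_sub, mul_sub, sub_eq_add_neg, sub_eq_add_neg, AddChar.map_add_eq_mul,
        AddChar.map_add_eq_mul, AddChar.map_add_eq_mul]
      ring
    rw [Finset.sum_congr rfl fun x _ => h1 x]
    rw [Finset.sum_comm]
    refine Finset.sum_congr rfl fun u _ => ?_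
    rw [Finset.sum_comm]
    refine Finset.sum_congr rfl fun v _ => ?_
    rw [hSdef, ← Finset.sum_mul]
  have hS0 : ∀ v : ZMod p, S 0 v = if v = 0 then (p : ℂ) ^ m else 0 := by
    intro v
    rw [hSdef]
    by_cases hv : v = 0
    · simp [hv, hcard]
    · rw [if_neg hv]
      have : ∀ x : F, ψ (aM 0 * x ^ 2 + aM v * x) = ψ (aM v * x) := by
        intro x; rw [map_zero, zero_mul, zero_add]
      rw [Finset.sum_congr rfl fun x _ => this x]
      exact sum_psi_mul ψ hψne ((map_ne_zero_iff aM hinj).mpr hv)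
  have hSu : ∀ u v : ZMod p, u ≠ 0 → S u v
      = qc (ZMod p) u * gaussSum (qc F) ψ
          * ψ₀ (-((m : ZMod p) * (v ^ 2 / (4 * u)))) := by
    intro u v hu
    have huF : aM u ≠ 0 := (map_ne_zero_iff aM hinj).mpr hu
    rw [hSdef, sum_psi_quad hF2 ψ hψne huF (aM v), hqmap]
    congr 1
    have harg : -((aM v) ^ 2 / (4 * aM u)) = aM (-(v ^ 2 / (4 * u))) := by
      rw [map_neg, map_div₀, map_pow, map_mul, map_ofNat]
    rw [harg, hψapp, hTmap, mul_neg]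
  set C : ZMod p := B ^ 2 / (m : ZMod p) - A with hC
  have inner : ∀ u : ZMod p, u ≠ 0 →
      ∑ v : ZMod p, S u v * (ψ₀ (-(u * A)) * ψ₀ (-(v * B)))
      = qc (ZMod p) (-(m : ZMod p)) * gaussSum (qc F) ψ * gaussSum (qc (ZMod p)) ψ₀
          * ψ₀ (u * C) := by
    intro u hu
    have ha0 : -((m : ZMod p) / (4 * u)) ≠ 0 :=
      neg_ne_zero.mpr (div_ne_zero hm0 (mul_ne_zero h4Z hu))
    have hstep : ∀ v : ZMod p, S u v * (ψ₀ (-(u * A)) * ψ₀ (-(v * B)))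
        = (qc (ZMod p) u * gaussSum (qc F) ψ * ψ₀ (-(u * A)))
            * ψ₀ ((-((m : ZMod p) / (4 * u))) * v ^ 2 + (-B) * v) := by
      intro v
      rw [hSu u v hu]
      have e1 : (-((m : ZMod p) / (4 * u))) * v ^ 2 + (-B) * v
          = -((m : ZMod p) * (v ^ 2 / (4 * u))) + -(v * B) := by ring
      rw [e1, AddChar.map_add_eq_mul]
      ring
    rw [Finset.sum_congr rfl fun v _ => hstep v, ← Finset.mul_sum]
    rw [sum_psi_quad hZ2 ψ₀ hψ₀ne ha0 (-B)]
    have e2 : -((-B) ^ 2 / (4 * (-((m : ZMod p) / (4 * u))))) = u * (B ^ 2 / (m : ZMod p)) := by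
      field_simp
    have e3 : qc (ZMod p) (-((m : ZMod p) / (4 * u)))
        = qc (ZMod p) (-(m : ZMod p)) * qc (ZMod p) u := by
      have h44 : (4 : ZMod p) * u ≠ 0 := mul_ne_zero h4Z hu
      have hrw : -((m : ZMod p) / (4 * u)) = (-(m : ZMod p)) * ((4 : ZMod p) * u)⁻¹ := by
        field_simp
      rw [hrw, map_mul, qc_inv h44, map_mul]
      have h4sq : qc (ZMod p) 4 = 1 := by
        have h : (4 : ZMod p) = 2 ^ 2 := by norm_num
        rw [h, qc_cast, quadraticChar_sq_one' h2Z, Int.cast_one]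
      rw [h4sq, one_mul]
    rw [e2, e3]
    have e4 : ψ₀ (-(u * A)) * ψ₀ (u * (B ^ 2 / (m : ZMod p))) = ψ₀ (u * C) := by
      rw [← AddChar.map_add_eq_mul, hC]
      congr 1
      ring
    have e5 : qc (ZMod p) u * qc (ZMod p) u = 1 := qc_sq hu
    calc qc (ZMod p) u * gaussSum (qc F) ψ * ψ₀ (-(u * A))
          * (qc (ZMod p) (-(m : ZMod p)) * qc (ZMod p) u * gaussSum (qc (ZMod p)) ψ₀
              * ψ₀ (u * (B ^ 2 / (m : ZMod p))))
        = (qc (ZMod p) u * qc (ZMod p) u)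
            * (ψ₀ (-(u * A)) * ψ₀ (u * (B ^ 2 / (m : ZMod p))))
            * (qc (ZMod p) (-(m : ZMod p)) * gaussSum (qc F) ψ
                * gaussSum (qc (ZMod p)) ψ₀) := by ring
      _ = qc (ZMod p) (-(m : ZMod p)) * gaussSum (qc F) ψ * gaussSum (qc (ZMod p)) ψ₀
            * ψ₀ (u * C) := by rw [e5, e4, one_mul]; ring
  have husplit : ∑ u : ZMod p, ∑ v : ZMod p, S u v * (ψ₀ (-(u * A)) * ψ₀ (-(v * B)))
      = (p : ℂ) ^ m + qc (ZMod p) (-(m : ZMod p)) * gaussSum (qc F) ψ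
          * gaussSum (qc (ZMod p)) ψ₀ * ((if C = 0 then (p : ℂ) else 0) - 1) := by
    rw [← Finset.sum_filter_add_sum_filter_not Finset.univ (fun u : ZMod p => u = 0)]
    congr 1
    · rw [Finset.filter_eq' Finset.univ (0 : ZMod p), if_pos (Finset.mem_univ _),
        Finset.sum_singleton]
      have h1 : ∀ v : ZMod p, S 0 v * (ψ₀ (-(0 * A)) * ψ₀ (-(v * B)))
          = if v = 0 then (p : ℂ) ^ m else 0 := by
        intro v
        rw [hS0]
        by_cases hv : v = 0
        · simp [hv]
        · simp [hv]
      rw [Finset.sum_congr rfl fun v _ => h1 v, Finset.sum_ite_eq' Finset.univ (0 : ZMod p)]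
      simp
    · rw [Finset.sum_congr rfl
        (fun u hu => inner u (by simpa using (Finset.mem_filter.mp hu).2))]
      rw [← Finset.mul_sum]
      congr 1
      have h2 : ∑ u ∈ Finset.univ.filter (fun u : ZMod p => ¬u = 0), ψ₀ (u * C)
          = (∑ u : ZMod p, ψ₀ (u * C)) - ψ₀ (0 * C) := by
        rw [← Finset.sum_filter_add_sum_filter_not Finset.univ (fun u : ZMod p => u = 0)
          (fun u => ψ₀ (u * C))]
        rw [Finset.filter_eq' Finset.univ (0 : ZMod p), if_pos (Finset.mem_univ _),
          Finset.sum_singleton]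
        ring
      rw [h2, orth]
      simp
  have master : (N : ℂ) * (p : ℂ) ^ 2
      = (p : ℂ) ^ m + η (-(m : ZMod p)) * Gm * G * ((if C = 0 then (p : ℂ) else 0) - 1) := by
    rw [← stepA, expand, husplit, hηq, hGm', hG']
  have hCC : C = (B ^ 2 - (m : ZMod p) * A) / (m : ZMod p) := by
    rw [hC]
    field_simp
  have hCiff : B ^ 2 - (m : ZMod p) * A = 0 ↔ C = 0 := by
    rw [hCC, div_eq_zero_iff]
    simp [hm0]
  have hp2 : ((p : ℂ) ^ 2) ≠ 0 := pow_ne_zero _ hpC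
  have hpm : (p : ℂ) ^ m = (p : ℂ) ^ (m - 2) * (p : ℂ) ^ 2 := by
    rw [← pow_add]
    congr 1
    omega
  constructor
  · intro hΔ
    have hC0 : C = 0 := hCiff.mp hΔ
    rw [hC0, if_pos rfl] at master
    refine mul_right_cancel₀ hp2 ?_
    rw [master, hpm]
    field_simp
  · intro hΔ
    have hC0 : ¬ C = 0 := fun h => hΔ (hCiff.mpr h)
    rw [if_neg hC0] at master
    refine mul_right_cancel₀ hp2 ?_
    rw [master, hpm]
    field_simp
    ring
end

section
/- Let p = 3 and r = 3^m with m ≥ 3 odd, and let D = {x ∈ F_r : Tr(x) = 1, Tr(x²) = 0}. If 3 | m, then #D = 3^{m-2}. In particular, for the code C_D = {(Tr(ax))_{x∈D} : a ∈ F_r}, the length equals 3^{m-2}. -/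
private lemma zmod3_cases : ∀ c : ZMod 3, c = 0 ∨ c = 1 ∨ c = 2 := by decide

private lemma zmod3_22 : (2 + 2 : ZMod 3) = 1 := by decide

/-- For `p = 3`, `r = 3^m` with `m ≥ 3` odd and `3 ∣ m`, the defining set
`D = {x ∈ F_r : Tr(x) = 1, Tr(x²) = 0}` has `#D = 3^{m-2}`; in particular the
code `C_D` has length `3^{m-2}`. -/
theorem stmt18 (m : ℕ) (hm : 3 ≤ m) (hmo : Odd m) (hdvd : 3 ∣ m)
    (F : Type) [Field F] [Fintype F] [DecidableEq F] [Algebra (ZMod 3) F]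
    (hcard : Fintype.card F = 3 ^ m) :
    (Finset.univ.filter (fun x : F =>
        Algebra.trace (ZMod 3) F x = 1 ∧ Algebra.trace (ZMod 3) F (x ^ 2) = 0)).card
      = 3 ^ (m - 2) := by
  classical
  haveI : Fact (Nat.Prime 3) := ⟨by norm_num⟩
  haveI : FiniteDimensional (ZMod 3) F := Module.Finite.of_finite
  set T := Algebra.trace (ZMod 3) F with hT
  have hs := Algebra.trace_surjective (ZMod 3) F
  have h1 : Fintype.card F = 3 ^ Module.finrank (ZMod 3) F := by
    have := Module.card_eq_pow_finrank (K := ZMod 3) (V := F)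
    rwa [ZMod.card] at this
  have hfr : Module.finrank (ZMod 3) F = m :=
    Nat.pow_right_injective (by norm_num) (h1.symm.trans hcard)
  -- trace of 1 is 0
  have htr1 : T (1 : F) = 0 := by
    have h := Algebra.trace_algebraMap (R := ZMod 3) (S := F) 1
    rw [map_one] at h
    rw [hT, h, hfr, nsmul_eq_mul, mul_one, ZMod.natCast_eq_zero_iff]
    exact hdvd
  -- all fibers of T have the same cardinality
  have fibcard : ∀ a b : ZMod 3,
      (Finset.univ.filter (fun x : F => T x = a)).card
        = (Finset.univ.filter (fun x : F => T x = b)).card := by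
    intro a b
    obtain ⟨t, ht⟩ := hs (b - a)
    refine Finset.card_bij' (fun x _ => x + t) (fun x _ => x - t) ?_ ?_
      (fun x _ => by ring) (fun x _ => by ring)
    · intro x hx
      simp only [Finset.mem_filter, Finset.mem_univ, true_and] at hx ⊢
      rw [map_add, hx, ht]; ring
    · intro x hx
      simp only [Finset.mem_filter, Finset.mem_univ, true_and] at hx ⊢
      rw [map_sub, hx, ht]; ring
  -- cardinality of the fiber T = 1
  have hsum : (Finset.univ.filter (fun x : F => T x = 1)).card = 3 ^ (m - 1) := by
    have htot : (Finset.univ : Finset F).card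
        = ∑ b : ZMod 3, (Finset.univ.filter (fun x : F => T x = b)).card :=
      Finset.card_eq_sum_card_fiberwise (fun x _ => Finset.mem_univ (T x))
    have h3 : ∑ b : ZMod 3, (Finset.univ.filter (fun x : F => T x = b)).card
        = 3 * (Finset.univ.filter (fun x : F => T x = 1)).card := by
      rw [Finset.sum_congr rfl (fun b _ => fibcard b 1), Finset.sum_const, Finset.card_univ, ZMod.card,
        smul_eq_mul]
    have hcard' : (3:ℕ) ^ m = 3 * (Finset.univ.filter (fun x : F => T x = 1)).card := by
      rw [← hcard, ← Finset.card_univ, htot, h3]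
    have hm1 : (3:ℕ) ^ m = 3 * 3 ^ (m - 1) := by
      rw [← pow_succ']
      congr 1
      omega
    omega
  -- the three subsets S b partition the fiber and have equal size
  set S := fun b : ZMod 3 => Finset.univ.filter
    (fun x : F => T x = 1 ∧ T (x ^ 2) = b) with hS
  have hstep : ∀ b : ZMod 3, (S b).card = (S (b + 2)).card := by
    intro b
    refine Finset.card_bij' (fun x _ => x + 1) (fun x _ => x - 1) ?_ ?_
      (fun x _ => by ring) (fun x _ => by ring)
    · intro x hx
      simp only [hS, Finset.mem_filter, Finset.mem_univ, true_and] at hx ⊢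
      obtain ⟨h1x, h2x⟩ := hx
      constructor
      · rw [map_add, h1x, htr1, add_zero]
      · have h : (x + 1) ^ 2 = x ^ 2 + (x + x) + 1 := by ring
        rw [h, map_add, map_add, map_add, h1x, h2x, htr1]
        ring
    · intro x hx
      simp only [hS, Finset.mem_filter, Finset.mem_univ, true_and] at hx ⊢
      obtain ⟨h1x, h2x⟩ := hx
      constructor
      · rw [map_sub, h1x, htr1, sub_zero]
      · have h : (x - 1) ^ 2 = x ^ 2 - (x + x) + 1 := by ring
        rw [h, map_add, map_sub, map_add, h1x, h2x, htr1]
        ring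
  have hall : ∀ b : ZMod 3, (S b).card = (S 0).card := by
    have e1 : (S 0).card = (S 2).card := by simpa using hstep 0
    have e2 : (S 2).card = (S 1).card := by
      have := hstep 2
      rwa [zmod3_22] at this
    intro b
    rcases zmod3_cases b with rfl | rfl | rfl
    · rfl
    · omega
    · omega
  have hpart : ∑ b : ZMod 3, (S b).card
      = (Finset.univ.filter (fun x : F => T x = 1)).card := by
    rw [Finset.card_eq_sum_card_fiberwise
      (f := fun x : F => T (x ^ 2)) (fun x _ => Finset.mem_univ _)]
    refine Finset.sum_congr rfl fun b _ => ?_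
    congr 1
    rw [hS]
    rw [Finset.filter_filter]
  have h3S : 3 * (S 0).card = 3 ^ (m - 1) := by
    rw [← hsum, ← hpart, Finset.sum_congr rfl (fun b _ => hall b), Finset.sum_const,
      Finset.card_univ, ZMod.card, smul_eq_mul]
  have hm2 : (3:ℕ) ^ (m - 1) = 3 * 3 ^ (m - 2) := by
    rw [← pow_succ']
    congr 1
    omega
  have : (S 0).card = 3 ^ (m - 2) := by omega
  simpa [hS] using this
end

section
/- Let p be a prime power q, and let C be an [n, k, d] linear code over F_q with k ≥ 1. Then n ≥ Σ_{i=0}^{k-1} ⌈d/q^i⌉ (the Griesmer bound). -/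
lemma myCeilDiv_ceilDiv (a b c : ℕ) (hb : 0 < b) (hc : 0 < c) :
    a ⌈/⌉ b ⌈/⌉ c = a ⌈/⌉ (b * c) := by
  have key : ∀ x : ℕ, a ⌈/⌉ b ⌈/⌉ c ≤ x ↔ a ⌈/⌉ (b * c) ≤ x := by
    intro x
    rw [ceilDiv_le_iff_le_mul hc, ceilDiv_le_iff_le_mul hb,
      ceilDiv_le_iff_le_mul (Nat.mul_pos hb hc), mul_assoc]
  exact le_antisymm ((key _).2 le_rfl) ((key _).1 le_rfl)

lemma myCeilDiv_mono (a b m : ℕ) (h : a ≤ b) : a ⌈/⌉ m ≤ b ⌈/⌉ m := by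
  rw [Nat.ceilDiv_eq_add_pred_div, Nat.ceilDiv_eq_add_pred_div]
  exact Nat.div_le_div_right (by omega)

lemma myCeilDiv_cast (a b : ℕ) (hb : 0 < b) :
    ((a ⌈/⌉ b : ℕ) : ℤ) = ⌈(a : ℚ) / (b : ℚ)⌉ := by
  have hbq : (0 : ℚ) < b := by exact_mod_cast hb
  apply le_antisymm
  · have h1 : (a : ℚ) / b ≤ ⌈(a : ℚ) / b⌉ := Int.le_ceil _
    have h0 : (0 : ℤ) ≤ ⌈(a : ℚ) / b⌉ := Int.ceil_nonneg (by positivity)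
    have h2 : a ≤ b * (⌈(a : ℚ) / b⌉).toNat := by
      have h3 := (div_le_iff₀ hbq).1 h1
      have h4 : ((⌈(a : ℚ) / b⌉).toNat : ℚ) = ((⌈(a : ℚ) / b⌉ : ℤ) : ℚ) := by
        exact_mod_cast congrArg (fun z : ℤ => (z : ℚ)) (Int.toNat_of_nonneg h0)
      have h5 : (a : ℚ) ≤ (b : ℚ) * ((⌈(a : ℚ) / b⌉).toNat : ℚ) := by
        rw [h4]; linarith
      exact_mod_cast h5
    have := (ceilDiv_le_iff_le_mul hb).2 h2
    omega
  · rw [Int.ceil_le]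
    push_cast
    rw [div_le_iff₀ hbq]
    have h6 : a ≤ b * (a ⌈/⌉ b) := le_smul_ceilDiv hb
    calc (a:ℚ) ≤ ((b * (a ⌈/⌉ b) : ℕ) : ℚ) := by exact_mod_cast h6
    _ = (a ⌈/⌉ b : ℕ) * b := by push_cast; ring

lemma griesmer_aux (F : Type) [Field F] [Fintype F] [DecidableEq F] :
    ∀ k : ℕ, ∀ (ι : Type) (_ : Fintype ι) (_ : DecidableEq ι)
      (C : Submodule F (ι → F)),
      Module.finrank F C = k → ∀ d : ℕ,
      (∀ c ∈ C, c ≠ 0 → d ≤ hammingNorm c) →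
      ∑ i ∈ Finset.range k, d ⌈/⌉ (Fintype.card F) ^ i ≤ Fintype.card ι := by
  intro k
  induction k with
  | zero => intro ι _ _ C hC d hd; simp
  | succ k ih =>
    intro ι instF instD C hC d hd
    set q := Fintype.card F with hq
    have hq1 : 1 < q := Fintype.one_lt_card
    -- there is a nonzero codeword
    have hnt : Nontrivial C := by
      apply Module.nontrivial_of_finrank_pos (R := F)
      omega
    obtain ⟨x0, hx0⟩ := exists_ne (0 : C)
    -- minimal weight e
    have hne : Set.Nonempty {m | ∃ x ∈ C, x ≠ 0 ∧ hammingNorm x = m} := by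
      refine ⟨hammingNorm (x0 : ι → F), (x0 : ι → F), x0.2, ?_, rfl⟩
      exact fun h => hx0 (Subtype.ext h)
    set e := sInf {m | ∃ x ∈ C, x ≠ 0 ∧ hammingNorm x = m} with he_def
    obtain ⟨c, hcC, hc0, hce⟩ := Nat.sInf_mem hne
    rw [← he_def] at hce
    have he_min : ∀ x ∈ C, x ≠ 0 → e ≤ hammingNorm x :=
      fun x hx hx0 => Nat.sInf_le ⟨x, hx, hx0, rfl⟩
    have he1 : 1 ≤ e := by
      rw [← hce]; exact hammingNorm_pos_iff.2 hc0
    have hde : d ≤ e := by rw [← hce]; exact hd c hcC hc0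
    -- support of c
    set S : Finset ι := Finset.univ.filter (fun j => c j ≠ 0) with hS_def
    have hScard : S.card = e := hce
    have hTcard : Fintype.card {j : ι // c j = 0} + e = Fintype.card ι := by
      rw [Fintype.card_subtype, ← hScard]
      have := Finset.card_filter_add_card_filter_not
        (s := (Finset.univ : Finset ι)) (p := fun j => c j = 0)
      simpa [hS_def, Finset.card_univ] using this
    -- the projection away from the support of c
    set π : (ι → F) →ₗ[F] ({j : ι // c j = 0} → F) :=
      LinearMap.funLeft F F Subtype.val with hπ_def
    have hπc : π c = 0 := by
      ext t; exact t.2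
    set f : C →ₗ[F] ({j : ι // c j = 0} → F) := π.comp C.subtype with hf_def
    -- kernel of f is the span of c
    have hker : LinearMap.ker f = Submodule.span F {(⟨c, hcC⟩ : C)} := by
      apply le_antisymm
      · rintro ⟨x, hxC⟩ hx
        have hsupp : ∀ j, c j = 0 → x j = 0 := by
          intro j hj
          exact congrFun (LinearMap.mem_ker.1 hx) ⟨j, hj⟩
        by_cases hx0 : x = 0
        · have : (⟨x, hxC⟩ : C) = 0 := Subtype.ext hx0
          rw [this]; exact zero_mem _
        · have hsub : Finset.univ.filter (fun j => x j ≠ 0) ⊆ S := by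
            intro j hj
            simp only [hS_def, Finset.mem_filter, Finset.mem_univ, true_and] at *
            exact fun h => hj (hsupp j h)
          have hxe : e ≤ hammingNorm x := he_min x hxC hx0
          obtain ⟨j0, hj0⟩ : S.Nonempty := Finset.card_pos.1 (by omega)
          have hcj0 : c j0 ≠ 0 := by
            simpa [hS_def] using hj0
          set lam := x j0 * (c j0)⁻¹ with hlam
          have hyC : x - lam • c ∈ C := C.sub_mem hxC (C.smul_mem _ hcC)
          have hy0 : x - lam • c = 0 := by
            by_contra hy
            have h1 : e ≤ hammingNorm (x - lam • c) := he_min _ hyC hy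
            have h2 : Finset.univ.filter (fun j => (x - lam • c) j ≠ 0) ⊆ S.erase j0 := by
              intro j hj
              simp only [Finset.mem_filter, Finset.mem_univ, true_and, Pi.sub_apply,
                Pi.smul_apply, smul_eq_mul] at hj
              refine Finset.mem_erase.2 ⟨?_, ?_⟩
              · rintro rfl
                apply hj
                rw [hlam]; field_simp; ring
              · simp only [hS_def, Finset.mem_filter, Finset.mem_univ, true_and]
                intro h
                apply hj
                rw [hsupp j h, h]; ring
            have h3 : hammingNorm (x - lam • c) ≤ e - 1 := by
              have h4 := Finset.card_le_card h2
              rw [Finset.card_erase_of_mem hj0, hScard] at h4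
              exact h4
            omega
          have hxc : x = lam • c := by rwa [sub_eq_zero] at hy0
          rw [Submodule.mem_span_singleton]
          exact ⟨lam, Subtype.ext hxc.symm⟩
      · rw [Submodule.span_singleton_le_iff_mem, LinearMap.mem_ker]
        ext t
        exact t.2
    have hcne : (⟨c, hcC⟩ : C) ≠ 0 := fun h => hc0 (congrArg Subtype.val h)
    have hkerrank : Module.finrank F (LinearMap.ker f) = 1 := by
      rw [hker]
      exact finrank_span_singleton hcne
    have hrange : LinearMap.range f = C.map π := by
      rw [hf_def, LinearMap.range_comp, Submodule.range_subtype]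
    have hrank' : Module.finrank F (C.map π) = k := by
      have h := LinearMap.finrank_range_add_finrank_ker f
      rw [hC, hkerrank, hrange] at h
      omega
    -- minimum weight of the residual code
    have hmin' : ∀ y ∈ C.map π, y ≠ 0 → e ⌈/⌉ q ≤ hammingNorm y := by
      rintro y ⟨x, hxC, rfl⟩ hy0
      set w := hammingNorm (π x) with hw
      rw [ceilDiv_le_iff_le_mul (by omega : 0 < q)]
      have key : ∀ lam : F, hammingNorm (x - lam • c)
          + (S.filter (fun j => x j = lam * c j)).card = w + e := by
        intro lam
        have hU : hammingNorm (x - lam • c)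
            = (Finset.univ.filter (fun j => x j - lam * c j ≠ 0)).card := by
          simp only [hammingNorm, Pi.sub_apply, Pi.smul_apply, smul_eq_mul]
        set U := Finset.univ.filter (fun j => x j - lam * c j ≠ 0) with hU_def
        have hsplit : (U.filter (fun j => c j = 0)).card
            + (U.filter (fun j => ¬ c j = 0)).card = U.card :=
          Finset.card_filter_add_card_filter_not _
        have hpart1 : (U.filter (fun j => c j = 0)).card = w := by
          have h1 : U.filter (fun j => c j = 0)
              = Finset.univ.filter (fun j => c j = 0 ∧ x j ≠ 0) := by
            rw [hU_def, Finset.filter_filter]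
            apply Finset.filter_congr
            intro j _
            constructor
            · rintro ⟨h1, h2⟩
              refine ⟨h2, fun h => h1 ?_⟩
              rw [h, h2]; ring
            · rintro ⟨h1, h2⟩
              refine ⟨?_, h1⟩
              intro h
              rw [h1] at h
              apply h2
              simpa using h
          rw [h1, hw]
          have hval : hammingNorm (π x)
              = Fintype.card {t : {j : ι // c j = 0} // x t.1 ≠ 0} := by
            rw [Fintype.card_subtype]
            rfl
          rw [hval, ← Fintype.card_subtype]
          apply Fintype.card_congr
          exact
            { toFun := fun j => ⟨⟨j.1, j.2.1⟩, j.2.2⟩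
              invFun := fun t => ⟨t.1.1, t.1.2, t.2⟩
              left_inv := fun j => rfl
              right_inv := fun t => rfl }
        have hpart2 : (U.filter (fun j => ¬ c j = 0)).card
            + (S.filter (fun j => x j = lam * c j)).card = e := by
          have h1 : U.filter (fun j => ¬ c j = 0)
              = S.filter (fun j => x j - lam * c j ≠ 0) := by
            rw [hU_def, hS_def, Finset.filter_filter, Finset.filter_filter]
            apply Finset.filter_congr
            intro j _
            exact and_comm
          have h2 : S.filter (fun j => x j = lam * c j)
              = S.filter (fun j => ¬ (x j - lam * c j ≠ 0)) := by
            apply Finset.filter_congr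
            intro j _
            rw [not_not, sub_eq_zero]
          rw [h1, h2, Finset.card_filter_add_card_filter_not, hScard]
        omega
      have hsum : ∑ lam : F, (S.filter (fun j => x j = lam * c j)).card = e := by
        rw [← hScard]
        have h1 : ∀ lam : F, S.filter (fun j => x j = lam * c j)
            = S.filter (fun j => x j / c j = lam) := by
          intro lam
          apply Finset.filter_congr
          intro j hj
          have hcj : c j ≠ 0 := by
            rw [hS_def] at hj
            simpa using hj
          exact (div_eq_iff hcj).symm
        simp only [h1]
        exact (Finset.card_eq_sum_card_fiberwise (fun j _ => Finset.mem_univ (x j / c j))).symm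
      have hge : ∀ lam : F, e ≤ hammingNorm (x - lam • c) := by
        intro lam
        apply he_min _ (C.sub_mem hxC (C.smul_mem _ hcC))
        intro h
        apply hy0
        have h2 : π (x - lam • c) = 0 := by rw [h]; simp
        rwa [map_sub, map_smul, hπc, smul_zero, sub_zero] at h2
      have total : ∑ lam : F, (hammingNorm (x - lam • c)
          + (S.filter (fun j => x j = lam * c j)).card) = q * (w + e) := by
        rw [Finset.sum_congr rfl (fun lam _ => key lam)]
        rw [Finset.sum_const, Finset.card_univ, smul_eq_mul, hq]
      have hge2 : q * e + e ≤ q * (w + e) := by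
        rw [← total, Finset.sum_add_distrib, hsum]
        have : q * e ≤ ∑ lam : F, hammingNorm (x - lam • c) := by
          calc q * e = ∑ _lam : F, e := by
                rw [Finset.sum_const, Finset.card_univ, smul_eq_mul, hq]
            _ ≤ _ := Finset.sum_le_sum (fun lam _ => hge lam)
        omega
      have : q * (w + e) = q * w + q * e := by ring
      omega
    -- apply the induction hypothesis
    have hIH := ih {j : ι // c j = 0} inferInstance inferInstance (C.map π) hrank'
      (e ⌈/⌉ q) hmin'
    have hstep : ∀ i, (e ⌈/⌉ q) ⌈/⌉ q ^ i = e ⌈/⌉ q ^ (i + 1) := by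
      intro i
      rw [myCeilDiv_ceilDiv _ _ _ (by omega) (pow_pos (by omega) i), ← pow_succ']
    rw [Finset.sum_congr rfl (fun i _ => hstep i)] at hIH
    have hd0 : e ⌈/⌉ q ^ 0 = e := by simp
    calc ∑ i ∈ Finset.range (k + 1), d ⌈/⌉ q ^ i
        ≤ ∑ i ∈ Finset.range (k + 1), e ⌈/⌉ q ^ i :=
          Finset.sum_le_sum fun i _ => myCeilDiv_mono _ _ _ hde
      _ = (∑ i ∈ Finset.range k, e ⌈/⌉ q ^ (i + 1)) + e ⌈/⌉ q ^ 0 :=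
          Finset.sum_range_succ' _ _
      _ ≤ Fintype.card {j : ι // c j = 0} + e := by omega
      _ = Fintype.card ι := hTcard

/-- Griesmer bound: if `C ⊆ F_q^n` is a `k`-dimensional linear code (`k ≥ 1`) with
minimum Hamming weight `d` among nonzero codewords, then
`n ≥ ∑_{i=0}^{k-1} ⌈d/q^i⌉`. -/
theorem stmt19 (q n k d : ℕ) (F : Type) [Field F] [Fintype F] [DecidableEq F]
    (hF : Fintype.card F = q)
    (C : Submodule F (Fin n → F)) (hk : Module.finrank F C = k) (hk1 : 1 ≤ k)
    (hd1 : ∀ c ∈ C, c ≠ 0 → d ≤ hammingNorm c)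
    (hd2 : ∃ c ∈ C, c ≠ 0 ∧ hammingNorm c = d) :
    (n : ℤ) ≥ ∑ i ∈ Finset.range k, ⌈(d : ℚ) / (q : ℚ) ^ i⌉ := by
  subst hF
  have hq0 : 0 < Fintype.card F := Fintype.card_pos
  have h := griesmer_aux F k (Fin n) inferInstance inferInstance C hk d hd1
  rw [Fintype.card_fin] at h
  have heq : ∑ i ∈ Finset.range k, ⌈(d : ℚ) / ((Fintype.card F : ℕ) : ℚ) ^ i⌉
      = ((∑ i ∈ Finset.range k, d ⌈/⌉ (Fintype.card F) ^ i : ℕ) : ℤ) := by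
    rw [Nat.cast_sum]
    refine Finset.sum_congr rfl fun i _ => ?_
    rw [myCeilDiv_cast _ _ (pow_pos hq0 i)]
    norm_cast
  rw [heq]
  exact_mod_cast h
end
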